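/- For xₙ(t) = √n·cos(nt), one has [Cxₙ](s) = sin(ns)/(√n·s) for 0 < s ≤ 1, and the sequence ‖Cxₙ‖²_{L²(0,1)} = ∫₀¹ sin²(ns)/(n s²) ds converges to a finite limit (namely ∫₀^∞ sin²(u)/u² du = π/2) as n → ∞. -/

import Mathlib

open MeasureTheory Set Filter Real

/-- The measure of the unit interval (0,1] as a restriction of Lebesgue measure. -/
noncomputable def mu01 : Measure ℝ := volume.restrict (Ioc 0 1)

/-- The Cesàro operator: `[Cx](s) = (1/s) ∫₀ˢ x(t) dt`. -/
noncomputable def cesaro (x : ℝ → ℝ) : ℝ → ℝ :=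
  fun s => (1 / s) * ∫ t in Ioc (0:ℝ) s, x t

/-- The sequence `xₙ(t) = √n · cos(nt)`. -/
noncomputable def xcos (n : ℕ) : ℝ → ℝ := fun t => Real.sqrt n * Real.cos (n * t)

open Topology
open scoped ENNReal


lemma exp_decay_tendsto {c : ℝ} (hc : 0 < c) :
    Tendsto (fun x : ℝ => Real.exp (-(c * x))) atTop (𝓝 0) :=
  Real.tendsto_exp_neg_atTop_nhds_zero.comp (tendsto_id.const_mul_atTop hc)

lemma integral_t_exp {u : ℝ} (hu : 0 < u) :
    IntegrableOn (fun t => t * Real.exp (-(u * t))) (Ioi 0) ∧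
    ∫ t in Ioi (0:ℝ), t * Real.exp (-(u * t)) = 1 / u ^ 2 := by
  set H : ℝ → ℝ := fun t => -((t / u + 1 / u ^ 2) * Real.exp (-(u * t))) with hH
  have hderiv : ∀ t ∈ Ici (0:ℝ), HasDerivAt H (t * Real.exp (-(u * t))) t := by
    intro t _
    have h1 : HasDerivAt (fun t : ℝ => -(u * t)) (-u) t := by
      simpa using (hasDerivAt_id t).const_mul (-u)
    have h2 : HasDerivAt (fun t : ℝ => Real.exp (-(u * t)))
        (Real.exp (-(u * t)) * (-u)) t := h1.exp
    have h3 : HasDerivAt (fun t : ℝ => t / u + 1 / u ^ 2) (1 / u) t := by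
      have := ((hasDerivAt_id t).div_const u).add_const (1 / u ^ 2)
      simpa [one_div] using this
    have h4 := (h3.mul h2).neg
    refine h4.congr_deriv ?_
    have hu' : u ≠ 0 := ne_of_gt hu
    field_simp
    ring
  have htend : Tendsto H atTop (𝓝 0) := by
    have h0 : Tendsto (fun t : ℝ => (u * t) * Real.exp (-(u * t))) atTop (𝓝 0) := by
      have := (Real.tendsto_pow_mul_exp_neg_atTop_nhds_zero 1).comp
        (tendsto_id.const_mul_atTop hu (l := atTop))
      simpa [Function.comp_def] using this
    have h1 : Tendsto (fun t : ℝ =>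
        (-(1 / u ^ 2)) * ((u * t) * Real.exp (-(u * t)) + Real.exp (-(u * t))))
        atTop (𝓝 ((-(1 / u ^ 2)) * (0 + 0))) :=
      (h0.add (exp_decay_tendsto hu)).const_mul _
    simp only [add_zero, mul_zero] at h1
    refine h1.congr fun t => ?_
    have hu' : u ≠ 0 := ne_of_gt hu
    rw [hH]; field_simp
  have hnn : ∀ t ∈ Ioi (0:ℝ), 0 ≤ t * Real.exp (-(u * t)) := fun t ht =>
    mul_nonneg (le_of_lt ht) (Real.exp_pos _).le
  refine ⟨integrableOn_Ioi_deriv_of_nonneg' hderiv hnn htend, ?_⟩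
  rw [integral_Ioi_of_hasDerivAt_of_nonneg' hderiv hnn htend]
  simp [hH]

lemma integral_exp_sin_sq {t : ℝ} (ht : 0 < t) :
    IntegrableOn (fun u => Real.exp (-(u * t)) * Real.sin u ^ 2) (Ioi 0) ∧
    ∫ u in Ioi (0:ℝ), Real.exp (-(u * t)) * Real.sin u ^ 2 = 2 / (t * (t ^ 2 + 4)) := by
  have ht' : t ≠ 0 := ne_of_gt ht
  have hd : (t:ℝ) ^ 2 + 4 ≠ 0 := by positivity
  set G : ℝ → ℝ := fun u => Real.exp (-(u * t)) *
    (-(1 / (2 * t)) + t / (2 * (t ^ 2 + 4)) * Real.cos (2 * u)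
      - 1 / (t ^ 2 + 4) * Real.sin (2 * u)) with hG
  have hderiv : ∀ u ∈ Ici (0:ℝ), HasDerivAt G (Real.exp (-(u * t)) * Real.sin u ^ 2) u := by
    intro u _
    have h1 : HasDerivAt (fun u : ℝ => -(u * t)) (-t) u := by
      exact (hasDerivAt_mul_const t).neg
    have h2 : HasDerivAt (fun u : ℝ => Real.exp (-(u * t)))
        (Real.exp (-(u * t)) * (-t)) u := h1.exp
    have hcos : HasDerivAt (fun u : ℝ => Real.cos (2 * u))
        (-Real.sin (2 * u) * 2) u := by
      have := (hasDerivAt_id u).const_mul (2:ℝ)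
      simpa [Function.comp_def] using (Real.hasDerivAt_cos (2 * u)).comp u (by simpa using this)
    have hsin : HasDerivAt (fun u : ℝ => Real.sin (2 * u))
        (Real.cos (2 * u) * 2) u := by
      have := (hasDerivAt_id u).const_mul (2:ℝ)
      simpa [Function.comp_def] using (Real.hasDerivAt_sin (2 * u)).comp u (by simpa using this)
    have h3 : HasDerivAt (fun u : ℝ => -(1 / (2 * t)) + t / (2 * (t ^ 2 + 4)) * Real.cos (2 * u)
        - 1 / (t ^ 2 + 4) * Real.sin (2 * u))
        (t / (2 * (t ^ 2 + 4)) * (-Real.sin (2 * u) * 2)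
          - 1 / (t ^ 2 + 4) * (Real.cos (2 * u) * 2)) u := by
      exact ((hcos.const_mul _).const_add _).sub (hsin.const_mul _)
    have h4 := h2.mul h3
    refine h4.congr_deriv ?_
    have hsq : Real.sin u ^ 2 = 1 / 2 - Real.cos (2 * u) / 2 := by
      have := Real.cos_sq u
      have h5 := Real.sin_sq_add_cos_sq u
      nlinarith
    rw [hsq]
    field_simp
    ring
  have htend : Tendsto G atTop (𝓝 0) := by
    set M : ℝ := 1 / (2 * t) + t / (2 * (t ^ 2 + 4)) + 1 / (t ^ 2 + 4) with hM
    have hMtend : Tendsto (fun u : ℝ => M * Real.exp (-(t * u))) atTop (𝓝 0) := by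
      simpa using (exp_decay_tendsto ht).const_mul M
    refine squeeze_zero_norm (fun u => ?_) hMtend
    have he : (0:ℝ) < Real.exp (-(u * t)) := Real.exp_pos _
    have hb : |(-(1 / (2 * t)) + t / (2 * (t ^ 2 + 4)) * Real.cos (2 * u)
        - 1 / (t ^ 2 + 4) * Real.sin (2 * u))| ≤ M := by
      have h1 : |Real.cos (2 * u)| ≤ 1 := Real.abs_cos_le_one _
      have h2 : |Real.sin (2 * u)| ≤ 1 := Real.abs_sin_le_one _
      have hA : (0:ℝ) ≤ 1 / (2 * t) := by positivity
      have hB : (0:ℝ) ≤ t / (2 * (t ^ 2 + 4)) := by positivity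
      have hC : (0:ℝ) ≤ 1 / (t ^ 2 + 4) := by positivity
      rw [abs_le] at h1 h2 ⊢
      constructor <;> nlinarith [h1.1, h1.2, h2.1, h2.2]
    calc ‖G u‖ = Real.exp (-(u * t)) * |(-(1 / (2 * t)) + t / (2 * (t ^ 2 + 4)) * Real.cos (2 * u)
          - 1 / (t ^ 2 + 4) * Real.sin (2 * u))| := by
          rw [hG]; simp [abs_mul, abs_of_pos he]
      _ ≤ Real.exp (-(u * t)) * M := by
          exact mul_le_mul_of_nonneg_left hb he.le
      _ = M * Real.exp (-(t * u)) := by rw [mul_comm u t]; ring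
  have hnn : ∀ u ∈ Ioi (0:ℝ), 0 ≤ Real.exp (-(u * t)) * Real.sin u ^ 2 := fun u _ =>
    mul_nonneg (Real.exp_pos _).le (sq_nonneg _)
  refine ⟨integrableOn_Ioi_deriv_of_nonneg' hderiv hnn htend, ?_⟩
  rw [integral_Ioi_of_hasDerivAt_of_nonneg' hderiv hnn htend]
  rw [hG]
  simp only [zero_mul, neg_zero, Real.exp_zero, mul_zero, Real.cos_zero, Real.sin_zero, one_mul]
  field_simp
  ring

lemma integral_two_div :
    IntegrableOn (fun t : ℝ => 2 / (t ^ 2 + 4)) (Ioi 0) ∧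
    ∫ t in Ioi (0:ℝ), 2 / (t ^ 2 + 4) = π / 2 := by
  have hderiv : ∀ t ∈ Ici (0:ℝ), HasDerivAt (fun t : ℝ => Real.arctan (t / 2))
      (2 / (t ^ 2 + 4)) t := by
    intro t _
    have h1 : HasDerivAt (fun t : ℝ => t / 2) (1 / 2) t := by
      simpa using (hasDerivAt_id t).div_const 2
    have h2 := (Real.hasDerivAt_arctan (t / 2)).comp t h1
    refine h2.congr_deriv ?_
    have : (1:ℝ) + (t / 2) ^ 2 ≠ 0 := by positivity
    field_simp
    ring
  have hnn : ∀ t ∈ Ioi (0:ℝ), 0 ≤ 2 / (t ^ 2 + 4) := fun t _ => by positivity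
  have htend : Tendsto (fun t : ℝ => Real.arctan (t / 2)) atTop (𝓝 (π / 2)) :=
    (Real.tendsto_arctan_atTop.mono_right nhdsWithin_le_nhds).comp
      (tendsto_id.atTop_div_const two_pos)
  refine ⟨integrableOn_Ioi_deriv_of_nonneg' hderiv hnn htend, ?_⟩
  rw [integral_Ioi_of_hasDerivAt_of_nonneg' hderiv hnn htend]
  simp

lemma dirichlet_sq :
    IntegrableOn (fun u : ℝ => Real.sin u ^ 2 / u ^ 2) (Ioi 0) ∧
    ∫ u in Ioi (0:ℝ), Real.sin u ^ 2 / u ^ 2 = π / 2 := by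
  have key : ∫⁻ u in Ioi (0:ℝ), ENNReal.ofReal (Real.sin u ^ 2 / u ^ 2)
      = ENNReal.ofReal (π / 2) := by
    have hmeas : AEMeasurable (fun p : ℝ × ℝ =>
        ENNReal.ofReal (Real.sin p.1 ^ 2 * (p.2 * Real.exp (-(p.1 * p.2)))))
        ((volume.restrict (Ioi (0:ℝ))).prod (volume.restrict (Ioi (0:ℝ)))) := by
      apply Measurable.aemeasurable
      refine (ENNReal.continuous_ofReal.comp ?_).measurable
      exact ((Real.continuous_sin.comp continuous_fst).pow 2).mul
        (continuous_snd.mul (Real.continuous_exp.comp (continuous_fst.mul continuous_snd).neg))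
    have step1 : ∫⁻ u in Ioi (0:ℝ), ENNReal.ofReal (Real.sin u ^ 2 / u ^ 2)
        = ∫⁻ u in Ioi (0:ℝ), ∫⁻ t in Ioi (0:ℝ),
            ENNReal.ofReal (Real.sin u ^ 2 * (t * Real.exp (-(u * t)))) := by
      refine setLIntegral_congr_fun measurableSet_Ioi ?_
      intro u hu
      dsimp only
      have hu' : (0:ℝ) < u := hu
      have h1 : ∀ t : ℝ, ENNReal.ofReal (Real.sin u ^ 2 * (t * Real.exp (-(u * t))))
          = ENNReal.ofReal (Real.sin u ^ 2) * ENNReal.ofReal (t * Real.exp (-(u * t))) := by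
        intro t; rw [ENNReal.ofReal_mul (sq_nonneg _)]
      rw [show (fun t => ENNReal.ofReal (Real.sin u ^ 2 * (t * Real.exp (-(u * t)))))
          = fun t => ENNReal.ofReal (Real.sin u ^ 2) * ENNReal.ofReal (t * Real.exp (-(u * t)))
          from funext h1] at *
      rw [lintegral_const_mul' _ _ ENNReal.ofReal_ne_top]
      rw [← ofReal_integral_eq_lintegral_ofReal (integral_t_exp hu').1
        ((ae_restrict_iff' measurableSet_Ioi).2 (Filter.Eventually.of_forall
          fun t ht => mul_nonneg (le_of_lt ht) (Real.exp_pos _).le))]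
      rw [(integral_t_exp hu').2, ← ENNReal.ofReal_mul (sq_nonneg _)]
      congr 1
      rw [mul_one_div, div_eq_div_iff] <;> positivity
    have step2 : ∫⁻ u in Ioi (0:ℝ), ∫⁻ t in Ioi (0:ℝ),
            ENNReal.ofReal (Real.sin u ^ 2 * (t * Real.exp (-(u * t))))
        = ∫⁻ t in Ioi (0:ℝ), ∫⁻ u in Ioi (0:ℝ),
            ENNReal.ofReal (Real.sin u ^ 2 * (t * Real.exp (-(u * t)))) :=
      lintegral_lintegral_swap hmeas
    have step3 : ∫⁻ t in Ioi (0:ℝ), ∫⁻ u in Ioi (0:ℝ),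
            ENNReal.ofReal (Real.sin u ^ 2 * (t * Real.exp (-(u * t))))
        = ∫⁻ t in Ioi (0:ℝ), ENNReal.ofReal (2 / (t ^ 2 + 4)) := by
      refine setLIntegral_congr_fun measurableSet_Ioi ?_
      intro t ht
      dsimp only
      have ht' : (0:ℝ) < t := ht
      have h1 : ∀ u : ℝ, ENNReal.ofReal (Real.sin u ^ 2 * (t * Real.exp (-(u * t))))
          = ENNReal.ofReal t * ENNReal.ofReal (Real.exp (-(u * t)) * Real.sin u ^ 2) := by
        intro u
        rw [← ENNReal.ofReal_mul ht'.le]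
        congr 1; ring
      rw [show (fun u => ENNReal.ofReal (Real.sin u ^ 2 * (t * Real.exp (-(u * t)))))
          = fun u => ENNReal.ofReal t * ENNReal.ofReal (Real.exp (-(u * t)) * Real.sin u ^ 2)
          from funext h1]
      rw [lintegral_const_mul' _ _ ENNReal.ofReal_ne_top]
      rw [← ofReal_integral_eq_lintegral_ofReal (integral_exp_sin_sq ht').1
        (Filter.Eventually.of_forall fun u => mul_nonneg (Real.exp_pos _).le (sq_nonneg _))]
      rw [(integral_exp_sin_sq ht').2, ← ENNReal.ofReal_mul ht'.le]
      congr 1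
      field_simp
    rw [step1, step2, step3,
      ← ofReal_integral_eq_lintegral_ofReal integral_two_div.1
        (Filter.Eventually.of_forall fun t => by positivity),
      integral_two_div.2]
  have hmeas : AEStronglyMeasurable (fun u : ℝ => Real.sin u ^ 2 / u ^ 2)
      (volume.restrict (Ioi (0:ℝ))) := by
    apply Measurable.aestronglyMeasurable
    exact (Real.measurable_sin.pow_const 2).div (measurable_id.pow_const 2)
  have hnn : 0 ≤ᵐ[volume.restrict (Ioi (0:ℝ))] fun u : ℝ => Real.sin u ^ 2 / u ^ 2 :=
    Filter.Eventually.of_forall fun u => by positivity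
  have hint : IntegrableOn (fun u : ℝ => Real.sin u ^ 2 / u ^ 2) (Ioi 0) := by
    refine ⟨hmeas, ?_⟩
    rw [hasFiniteIntegral_iff_norm]
    have : ∫⁻ u in Ioi (0:ℝ), ENNReal.ofReal ‖Real.sin u ^ 2 / u ^ 2‖
        = ∫⁻ u in Ioi (0:ℝ), ENNReal.ofReal (Real.sin u ^ 2 / u ^ 2) := by
      refine lintegral_congr fun u => ?_
      rw [Real.norm_eq_abs, abs_of_nonneg (by positivity)]
    rw [this, key]
    exact ENNReal.ofReal_lt_top
  refine ⟨hint, ?_⟩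
  rw [integral_eq_lintegral_of_nonneg_ae hnn hmeas, key,
    ENNReal.toReal_ofReal (by positivity)]

/-- For `xₙ(t) = √n cos(nt)`: `[Cxₙ](s) = sin(ns)/(√n s)` on (0,1], and
`‖Cxₙ‖² = ∫₀¹ sin²(ns)/(n s²) ds → π/2`. -/
theorem cesaro_xcos_formula :
    (∀ n : ℕ, 0 < n → ∀ s : ℝ, 0 < s → s ≤ 1 →
      cesaro (xcos n) s = Real.sin (n * s) / (Real.sqrt n * s)) ∧
    Tendsto (fun n : ℕ => ∫ s in Ioc (0:ℝ) 1, Real.sin (n * s) ^ 2 / (n * s ^ 2))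
      atTop (nhds (π / 2)) := by
  constructor
  · intro n hn s hs _
    have hn0 : (0:ℝ) < (n:ℝ) := by exact_mod_cast hn
    have hn' : (n:ℝ) ≠ 0 := ne_of_gt hn0
    have hsq : Real.sqrt n ≠ 0 := by positivity
    have hmul : Real.sqrt n * Real.sqrt n = (n:ℝ) := Real.mul_self_sqrt hn0.le
    rw [cesaro]
    simp only [xcos]
    rw [← intervalIntegral.integral_of_le hs.le]
    rw [intervalIntegral.integral_const_mul]
    rw [intervalIntegral.integral_comp_mul_left Real.cos hn']
    rw [mul_zero, integral_cos, Real.sin_zero, sub_zero, smul_eq_mul]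
    field_simp
    linear_combination (Real.sin (s * (n:ℝ))) * hmul
  · have hchg : ∀ n : ℕ, 1 ≤ n →
        ∫ s in Ioc (0:ℝ) 1, Real.sin (n * s) ^ 2 / (n * s ^ 2)
        = ∫ u in Ioc (0:ℝ) (n:ℝ), Real.sin u ^ 2 / u ^ 2 := by
      intro n hn
      have hn0 : (0:ℝ) < (n:ℝ) := by exact_mod_cast hn
      have hn' : (n:ℝ) ≠ 0 := ne_of_gt hn0
      rw [← intervalIntegral.integral_of_le zero_le_one,
        ← intervalIntegral.integral_of_le hn0.le]
      have h1 := intervalIntegral.smul_integral_comp_mul_left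
        (f := fun u : ℝ => Real.sin u ^ 2 / u ^ 2) (a := 0) (b := 1) (n:ℝ)
      rw [mul_zero, mul_one] at h1
      rw [← h1, smul_eq_mul, ← intervalIntegral.integral_const_mul]
      congr 1
      funext x
      by_cases hx : x = 0
      · simp [hx]
      · rw [mul_pow]
        field_simp
    have hmono : Monotone (fun n : ℕ => Ioc (0:ℝ) (n:ℝ)) := fun a b hab =>
      Ioc_subset_Ioc_right (by exact_mod_cast hab)
    have hUnion : ⋃ n : ℕ, Ioc (0:ℝ) (n:ℝ) = Ioi 0 :=
      iUnion_Ioc_eq_Ioi_self_iff.2 fun x _ => (exists_nat_ge x).imp fun n h => h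
    have hint : IntegrableOn (fun u : ℝ => Real.sin u ^ 2 / u ^ 2)
        (⋃ n : ℕ, Ioc (0:ℝ) (n:ℝ)) := by rw [hUnion]; exact dirichlet_sq.1
    have htendsto := tendsto_setIntegral_of_monotone
      (fun i : ℕ => measurableSet_Ioc) hmono hint
    rw [hUnion, dirichlet_sq.2] at htendsto
    refine htendsto.congr' ?_
    filter_upwards [eventually_ge_atTop 1] with n hn
    exact (hchg n hn).symm
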